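/- Let S be a set of cardinality κ > ω and let X be S equipped with the cofinite topology. Then every infinite cardinal λ is a caliber for X (and consequently also a caliber*, precaliber, precaliber*, weak precaliber, and weak precaliber* for X). -/

import Mathlib

open Cardinal Set

universe u

lemma exists_small_level {Y : Type u} {lam : Cardinal.{u}} (hY : ℵ₀ < #Y)
    (g : Y → Cardinal.{u}) (hg : ∀ y, g y < lam) :
    ∃ ν < lam, {y | g y ≤ ν}.Infinite := by
  by_contra h
  push_neg at h
  have hfin : ∀ ν < lam, {y | g y ≤ ν}.Finite := fun ν hν =>
    h ν hν
  set R : Set Cardinal.{u} := Set.range g with hR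
  -- predecessors in R of any element of R form a finite set
  have hpred : ∀ ν ∈ R, {μ ∈ R | μ < ν}.Finite := by
    rintro ν ⟨y₀, rfl⟩
    have h1 : {μ ∈ R | μ < g y₀} ⊆ g '' {y | g y ≤ g y₀} := by
      rintro μ ⟨⟨y, rfl⟩, hμ⟩
      exact ⟨y, hμ.le, rfl⟩
    exact ((hfin _ (hg y₀)).image g).subset h1
  -- hence R is countable
  have hRc : R.Countable := by
    rw [Set.countable_iff_exists_injOn]
    refine ⟨fun ν => {μ ∈ R | μ < ν}.ncard, ?_⟩
    have hmono : ∀ ν₁ ∈ R, ∀ ν₂ ∈ R, ν₁ < ν₂ →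
        {μ ∈ R | μ < ν₁}.ncard < {μ ∈ R | μ < ν₂}.ncard := by
      intro ν₁ h₁ ν₂ h₂ hlt
      refine Set.ncard_lt_ncard ⟨fun μ hμ => ⟨hμ.1, hμ.2.trans hlt⟩, ?_⟩ (hpred _ h₂)
      intro hsub
      exact absurd (hsub ⟨h₁, hlt⟩).2 (lt_irrefl _)
    intro ν₁ h₁ ν₂ h₂ he
    by_contra hne
    rcases lt_or_gt_of_ne hne with h' | h'
    · exact absurd he (hmono _ h₁ _ h₂ h').ne
    · exact absurd he.symm (hmono _ h₂ _ h₁ h').ne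
  -- Y is a countable union of finite fibers, hence countable: contradiction
  have hYc : (Set.univ : Set Y).Countable := by
    have : (Set.univ : Set Y) ⊆ ⋃ ν ∈ R, {y | g y = ν} := by
      intro y _
      exact Set.mem_biUnion ⟨y, rfl⟩ rfl
    refine Set.Countable.mono this (hRc.biUnion fun ν hν => ?_)
    rcases hν with ⟨y₀, rfl⟩
    exact ((hfin _ (hg y₀)).subset fun y hy => le_of_eq hy).countable
  rw [Set.countable_univ_iff] at hYc
  exact absurd (Cardinal.mk_le_aleph0) (not_le.mpr hY)

lemma isCaliber_cofinite_aux (X : Type u) (hκ : ℵ₀ < #X) (lam : Cardinal.{u})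
    (hlam : ℵ₀ ≤ lam) {ι : Type u} (U : ι → Set (CofiniteTopology X))
    (hcard : #ι = lam) (hopen : ∀ i, IsOpen (U i)) (hne : ∀ i, (U i).Nonempty) :
    ∃ x : CofiniteTopology X, #{i | x ∈ U i} = lam := by
  have hFin : ∀ i, ((U i)ᶜ).Finite := fun i =>
    (CofiniteTopology.isOpen_iff.mp (hopen i)) (hne i)
  have hX' : ℵ₀ < #(CofiniteTopology X) := by rwa [← Cardinal.mk_congr CofiniteTopology.of]
  by_contra h
  push_neg at h
  have hlt : ∀ x : CofiniteTopology X, #{i | x ∈ U i} < lam := fun x =>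
    lt_of_le_of_ne (hcard ▸ Cardinal.mk_set_le _) (h x)
  rcases lt_or_ge lam #X with hcase | hcase
  · -- lam < #X : union of all complements is too small to cover X
    have hsmall : #(⋃ i, (U i)ᶜ) < #(CofiniteTopology X) := by
      calc #(⋃ i, (U i)ᶜ) ≤ #ι * ⨆ i, #(((U i)ᶜ : Set (CofiniteTopology X))) := Cardinal.mk_iUnion_le fun i => (U i)ᶜ
        _ ≤ lam * ℵ₀ := by
            rw [hcard]
            exact mul_le_mul_right (ciSup_le' fun i => ((hFin i).lt_aleph0).le) _
        _ = lam := Cardinal.mul_aleph0_eq hlam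
        _ < #(CofiniteTopology X) := by rwa [← Cardinal.mk_congr CofiniteTopology.of]
    have hex : ∃ x : CofiniteTopology X, x ∉ ⋃ i, (U i)ᶜ := by
      by_contra hc
      push_neg at hc
      have : (Set.univ : Set (CofiniteTopology X)) ⊆ ⋃ i, (U i)ᶜ := fun x _ => hc x
      have h2 := Cardinal.mk_le_mk_of_subset this
      rw [Cardinal.mk_univ] at h2
      exact absurd h2 (not_le.mpr hsmall)
    obtain ⟨x, hx⟩ := hex
    simp only [Set.mem_iUnion, not_exists, Set.mem_compl_iff, not_not] at hx
    have heq : {i | x ∈ U i} = Set.univ := Set.eq_univ_of_forall hx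
    exact h x (by rw [heq, Cardinal.mk_univ, hcard])
  · -- #X ≤ lam
    have hlam' : ℵ₀ < lam := lt_of_lt_of_le hκ hcase
    obtain ⟨ν, hν, hinf⟩ := exists_small_level hX' (fun x => #{i | x ∈ U i}) hlt
    -- take a countably infinite subset A of the level set
    set f := hinf.natEmbedding
    set A : Set (CofiniteTopology X) := Set.range fun n => (f n : CofiniteTopology X)
      with hA
    have hAsub : A ⊆ {y | #{i | y ∈ U i} ≤ ν} := by
      rintro x ⟨n, rfl⟩; exact (f n).2
    have hAinf : A.Infinite := Set.infinite_range_of_injective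
      (Subtype.val_injective.comp f.injective)
    have hAc : #A ≤ ℵ₀ := (Set.countable_range _).le_aleph0
    -- every index is covered
    have hcover : (Set.univ : Set ι) ⊆ ⋃ x ∈ A, {i | x ∈ U i} := by
      intro i _
      obtain ⟨x, hxA, hxU⟩ := (hAinf.diff (hFin i)).nonempty
      exact Set.mem_biUnion hxA (Set.notMem_compl_iff.mp hxU)
    have : lam ≤ ℵ₀ * ν := by
      calc lam = #(Set.univ : Set ι) := by rw [Cardinal.mk_univ, hcard]
        _ ≤ #(⋃ x ∈ A, {i | x ∈ U i}) := Cardinal.mk_le_mk_of_subset hcover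
        _ ≤ #A * ⨆ x : A, #{i | (x : CofiniteTopology X) ∈ U i} :=
            Cardinal.mk_biUnion_le _ _
        _ ≤ ℵ₀ * ν := mul_le_mul' hAc (ciSup_le' fun x => hAsub x.2)
    exact absurd this (not_le.mpr (Cardinal.mul_lt_of_lt hlam'.le hlam' hν))

/-- `κ` is a caliber for `X`: every κ-indexed family of non-empty open sets
(repetitions allowed) has a κ-sized subfamily with non-empty intersection. -/
def IsCaliber (X : Type u) [TopologicalSpace X] (κ : Cardinal.{u}) : Prop :=
  ∀ {ι : Type u} (U : ι → Set X), #ι = κ → (∀ i, IsOpen (U i)) → (∀ i, (U i).Nonempty) →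
    ∃ J : Set ι, #J = κ ∧ (⋂ i ∈ J, U i).Nonempty

/-- `κ` is a precaliber for `X`: every κ-indexed family of non-empty open sets
has a κ-sized subfamily which is centered. -/
def IsPrecaliber (X : Type u) [TopologicalSpace X] (κ : Cardinal.{u}) : Prop :=
  ∀ {ι : Type u} (U : ι → Set X), #ι = κ → (∀ i, IsOpen (U i)) → (∀ i, (U i).Nonempty) →
    ∃ J : Set ι, #J = κ ∧
      ∀ s : Finset ι, ↑s ⊆ J → s.Nonempty → (⋂ i ∈ s, U i).Nonempty

/-- `κ` is a weak precaliber for `X`: every κ-indexed family of non-empty open sets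
has a κ-sized subfamily which is linked. -/
def IsWeakPrecaliber (X : Type u) [TopologicalSpace X] (κ : Cardinal.{u}) : Prop :=
  ∀ {ι : Type u} (U : ι → Set X), #ι = κ → (∀ i, IsOpen (U i)) → (∀ i, (U i).Nonempty) →
    ∃ J : Set ι, #J = κ ∧ ∀ i ∈ J, ∀ j ∈ J, (U i ∩ U j).Nonempty

/-- `κ` is a caliber* for `X`: every family of non-empty open sets of cardinality `κ`
has a subfamily of cardinality `κ` with non-empty intersection. -/
def IsCaliberStar (X : Type u) [TopologicalSpace X] (κ : Cardinal.{u}) : Prop :=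
  ∀ 𝒰 : Set (Set X), #𝒰 = κ → (∀ U ∈ 𝒰, IsOpen U) → (∀ U ∈ 𝒰, U.Nonempty) →
    ∃ 𝒱 ⊆ 𝒰, #𝒱 = κ ∧ (⋂₀ 𝒱).Nonempty

/-- `κ` is a precaliber* for `X`: every family of non-empty open sets of cardinality `κ`
has a centered subfamily of cardinality `κ`. -/
def IsPrecaliberStar (X : Type u) [TopologicalSpace X] (κ : Cardinal.{u}) : Prop :=
  ∀ 𝒰 : Set (Set X), #𝒰 = κ → (∀ U ∈ 𝒰, IsOpen U) → (∀ U ∈ 𝒰, U.Nonempty) →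
    ∃ 𝒱 ⊆ 𝒰, #𝒱 = κ ∧
      ∀ s : Finset (Set X), ↑s ⊆ 𝒱 → s.Nonempty → (⋂₀ (↑s : Set (Set X))).Nonempty

/-- `κ` is a weak precaliber* for `X`: every family of non-empty open sets of
cardinality `κ` has a linked subfamily of cardinality `κ`. -/
def IsWeakPrecaliberStar (X : Type u) [TopologicalSpace X] (κ : Cardinal.{u}) : Prop :=
  ∀ 𝒰 : Set (Set X), #𝒰 = κ → (∀ U ∈ 𝒰, IsOpen U) → (∀ U ∈ 𝒰, U.Nonempty) →
    ∃ 𝒱 ⊆ 𝒰, #𝒱 = κ ∧ ∀ U ∈ 𝒱, ∀ V ∈ 𝒱, (U ∩ V).Nonempty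

/-- `o X` : the number of open subsets of `X`. -/
def oCard (X : Type u) [TopologicalSpace X] : Cardinal.{u} :=
  #{U : Set X | IsOpen U}

/-- A cellular family: a pairwise disjoint collection of non-empty open sets. -/
def IsCellularFamily (X : Type u) [TopologicalSpace X] (𝒰 : Set (Set X)) : Prop :=
  (∀ U ∈ 𝒰, IsOpen U) ∧ (∀ U ∈ 𝒰, U.Nonempty) ∧ 𝒰.Pairwise Disjoint

theorem stmt12 (X : Type u) (κ : Cardinal.{u}) (hX : #X = κ) (hκ : ℵ₀ < κ)
    (lam : Cardinal.{u}) (hlam : ℵ₀ ≤ lam) :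
    IsCaliber (CofiniteTopology X) lam ∧ IsCaliberStar (CofiniteTopology X) lam ∧
    IsPrecaliber (CofiniteTopology X) lam ∧ IsPrecaliberStar (CofiniteTopology X) lam ∧
    IsWeakPrecaliber (CofiniteTopology X) lam ∧ IsWeakPrecaliberStar (CofiniteTopology X) lam := by

  subst hX
  -- the caliber property
  have hcal : IsCaliber (CofiniteTopology X) lam := by
    intro ι U hcard hopen hne
    obtain ⟨x, hx⟩ := isCaliber_cofinite_aux X hκ lam hlam U hcard hopen hne
    refine ⟨{i | x ∈ U i}, hx, ⟨x, ?_⟩⟩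
    simp only [Set.mem_iInter]
    exact fun i hi => hi
  -- the caliber* property
  have hcalstar : IsCaliberStar (CofiniteTopology X) lam := by
    intro 𝒰 hcard ho hn
    obtain ⟨J, hJcard, hJ⟩ := hcal (fun V : ↥𝒰 => (V : Set (CofiniteTopology X)))
      hcard (fun V => ho V V.2) (fun V => hn V V.2)
    refine ⟨Subtype.val '' J, Subtype.coe_image_subset _ _, ?_, ?_⟩
    · rw [Cardinal.mk_image_eq Subtype.val_injective]; exact hJcard
    · rw [Set.sInter_image]; exact hJ
  refine ⟨hcal, hcalstar, ?_, ?_, ?_, ?_⟩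
  · -- precaliber
    intro ι U hcard hopen hne
    obtain ⟨J, hJcard, x, hx⟩ := hcal U hcard hopen hne
    simp only [Set.mem_iInter] at hx
    refine ⟨J, hJcard, fun s hs _ => ⟨x, ?_⟩⟩
    simp only [Set.mem_iInter]
    exact fun i hi => hx i (hs hi)
  · -- precaliber*
    intro 𝒰 hcard ho hn
    obtain ⟨𝒱, h𝒱, hc, x, hx⟩ := hcalstar 𝒰 hcard ho hn
    refine ⟨𝒱, h𝒱, hc, fun s hs _ => ⟨x, fun V hV => hx _ (hs hV)⟩⟩
  · -- weak precaliber
    intro ι U hcard hopen hne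
    obtain ⟨J, hJcard, x, hx⟩ := hcal U hcard hopen hne
    simp only [Set.mem_iInter] at hx
    exact ⟨J, hJcard, fun i hi j hj => ⟨x, hx i hi, hx j hj⟩⟩
  · -- weak precaliber*
    intro 𝒰 hcard ho hn
    obtain ⟨𝒱, h𝒱, hc, x, hx⟩ := hcalstar 𝒰 hcard ho hn
    exact ⟨𝒱, h𝒱, hc, fun V hV W hW => ⟨x, hx V hV, hx W hW⟩⟩
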